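/- There exists a unique real α with 0 < α < 1 such that f(α, 1/α) = 0, where f is the A-polynomial of the 5₂ knot, f(x,y) = 1 + y(−1 + 2x² + 2x⁴ − x⁸ + x¹⁰) + y²(x⁴ − x⁶ + 2x¹⁰ + 2x¹² − x¹⁴) + y³x¹⁴, subject to the additional constraint from the curve C that x < 1 and y > 1; moreover 0.447 < α < 0.448. -/

import Mathlib

def fiveTwoA (x y : ℝ) : ℝ :=
  1 + y * (-1 + 2 * x ^ 2 + 2 * x ^ 4 - x ^ 8 + x ^ 10) +
    y ^ 2 * (x ^ 4 - x ^ 6 + 2 * x ^ 10 + 2 * x ^ 12 - x ^ 14) + y ^ 3 * x ^ 14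

/-- Reduced polynomial: `fiveTwoA α α⁻¹ = pAux α / α` for `α > 0`. -/
noncomputable def pAux (t : ℝ) : ℝ :=
  -1 + t + 2*t^2 + t^3 + 2*t^4 - t^5 - t^8 + 2*t^9 + t^10 + 2*t^11 + t^12 - t^13

lemma pAux_hasDerivAt (x : ℝ) :
    HasDerivAt pAux
      (1 + 4*x + 3*x^2 + 8*x^3 - 5*x^4 - 8*x^7 + 18*x^8 + 10*x^9 + 22*x^10 + 12*x^11 - 13*x^12) x := by
  have h : HasDerivAt (fun t : ℝ =>
      -1 + t + 2*t^2 + t^3 + 2*t^4 - t^5 - t^8 + 2*t^9 + t^10 + 2*t^11 + t^12 - t^13)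
      (0 + 1 + 2*(2*x^1) + 3*x^2 + 2*(4*x^3) - 5*x^4 - 8*x^7 + 2*(9*x^8) + 10*x^9
        + 2*(11*x^10) + 12*x^11 - 13*x^12) x := by
    exact (((((((((((hasDerivAt_const x (-1:ℝ)).add (hasDerivAt_id x)).add
      ((hasDerivAt_pow 2 x).const_mul 2)).add (hasDerivAt_pow 3 x)).add
      ((hasDerivAt_pow 4 x).const_mul 2)).sub (hasDerivAt_pow 5 x)).sub
      (hasDerivAt_pow 8 x)).add ((hasDerivAt_pow 9 x).const_mul 2)).add
      (hasDerivAt_pow 10 x)).add ((hasDerivAt_pow 11 x).const_mul 2)).add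
      (hasDerivAt_pow 12 x)).sub (hasDerivAt_pow 13 x)
  convert h using 1
  · rfl
  ring

lemma pAux_deriv_pos {x : ℝ} (h0 : 0 < x) (h1 : x < 1) :
    0 < 1 + 4*x + 3*x^2 + 8*x^3 - 5*x^4 - 8*x^7 + 18*x^8 + 10*x^9 + 22*x^10 + 12*x^11 - 13*x^12 := by
  have h4 : x^4 ≤ x^3 := pow_le_pow_of_le_one h0.le h1.le (by norm_num)
  have h7 : x^7 ≤ x := by
    calc x^7 ≤ x^1 := pow_le_pow_of_le_one h0.le h1.le (by norm_num)
    _ = x := pow_one x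
  have h12 : x^12 ≤ x^10 := pow_le_pow_of_le_one h0.le h1.le (by norm_num)
  nlinarith [sq_nonneg (1 - 2*x), sq_nonneg x, pow_pos h0 3, pow_pos h0 8, pow_pos h0 9,
    mul_pos h0 h0]

lemma pAux_strictMonoOn : StrictMonoOn pAux (Set.Icc 0 1) := by
  apply strictMonoOn_of_deriv_pos (convex_Icc 0 1)
  · exact Continuous.continuousOn (by
      have : Continuous (fun t : ℝ =>
        -1 + t + 2*t^2 + t^3 + 2*t^4 - t^5 - t^8 + 2*t^9 + t^10 + 2*t^11 + t^12 - t^13) := by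
        continuity
      exact this)
  · intro x hx
    rw [interior_Icc] at hx
    rw [(pAux_hasDerivAt x).deriv]
    exact pAux_deriv_pos hx.1 hx.2

lemma fiveTwoA_eq {α : ℝ} (h : 0 < α) : fiveTwoA α α⁻¹ = pAux α / α := by
  have hne : α ≠ 0 := h.ne'
  unfold fiveTwoA pAux
  field_simp
  ring

lemma root_iff {α : ℝ} (h : 0 < α) : fiveTwoA α α⁻¹ = 0 ↔ pAux α = 0 := by
  rw [fiveTwoA_eq h, div_eq_zero_iff]
  simp [h.ne']

lemma pAux_low : pAux 0.447 < 0 := by norm_num [pAux]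

lemma pAux_high : 0 < pAux 0.448 := by norm_num [pAux]

lemma pAux_cont : ContinuousOn pAux (Set.Icc (0.447:ℝ) 0.448) := by
  apply Continuous.continuousOn
  unfold pAux
  continuity

theorem stmt_7 :
    (∃! α : ℝ, 0 < α ∧ α < 1 ∧ fiveTwoA α α⁻¹ = 0) ∧
    (∀ α : ℝ, 0 < α → α < 1 → fiveTwoA α α⁻¹ = 0 → 0.447 < α ∧ α < 0.448) := by
  -- root location lemma
  have hloc : ∀ α : ℝ, 0 < α → α < 1 → fiveTwoA α α⁻¹ = 0 → 0.447 < α ∧ α < 0.448 := by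
    intro α h0 h1 hf
    have hp : pAux α = 0 := (root_iff h0).mp hf
    have hmem : α ∈ Set.Icc (0:ℝ) 1 := ⟨h0.le, h1.le⟩
    have hm447 : (0.447:ℝ) ∈ Set.Icc (0:ℝ) 1 := by norm_num
    have hm448 : (0.448:ℝ) ∈ Set.Icc (0:ℝ) 1 := by norm_num
    constructor
    · have := (pAux_strictMonoOn.lt_iff_lt hm447 hmem).mpr
      by_contra hle
      push_neg at hle
      have : pAux α ≤ pAux 0.447 := by
        rcases eq_or_lt_of_le hle with h | h
        · rw [h]
        · exact (pAux_strictMonoOn hmem hm447 h).le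
      linarith [pAux_low]
    · by_contra hle
      push_neg at hle
      have : pAux 0.448 ≤ pAux α := by
        rcases eq_or_lt_of_le hle with h | h
        · rw [← h]
        · exact (pAux_strictMonoOn hm448 hmem h).le
      linarith [pAux_high]
  refine ⟨?_, hloc⟩
  -- existence via IVT
  obtain ⟨α, hαmem, hα⟩ : ∃ α ∈ Set.Ioo (0.447:ℝ) 0.448, pAux α = 0 := by
    have h := intermediate_value_Ioo (by norm_num : (0.447:ℝ) ≤ 0.448) pAux_cont
    have h0 : (0:ℝ) ∈ Set.Ioo (pAux 0.447) (pAux 0.448) := ⟨pAux_low, pAux_high⟩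
    obtain ⟨α, hmem, heq⟩ := h h0
    exact ⟨α, hmem, heq⟩
  have h0 : 0 < α := lt_trans (by norm_num) hαmem.1
  have h1 : α < 1 := lt_trans hαmem.2 (by norm_num)
  refine ⟨α, ⟨h0, h1, (root_iff h0).mpr hα⟩, ?_⟩
  rintro β ⟨hb0, hb1, hbf⟩
  have hpb : pAux β = 0 := (root_iff hb0).mp hbf
  exact pAux_strictMonoOn.injOn ⟨hb0.le, hb1.le⟩ ⟨h0.le, h1.le⟩ (by rw [hpb, hα])
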